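/- arXiv:0907.4241 — 2 statements merged into one kernel-verified Lean document; each statement's English description precedes it below -/
import Mathlib

section
/- With m_1, m_2 coprime and greater than one, a ≥ 2, b + c ≥ 2, gcd(a, b m_1 + c m_2) = 1, and S = ⟨a m_1, a m_2, b m_1 + c m_2⟩: a m_1 m_2 - a(b m_1 + c m_2) ∈ S if and only if (b = 0 and c ≤ m_1) or (c = 0 and b ≤ m_2). -/
lemma mem_closure_triple {p q r s : ℕ} :
    s ∈ AddSubmonoid.closure ({p, q, r} : Set ℕ) ↔
      ∃ x y z : ℕ, s = x * p + y * q + z * r := by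
  constructor
  · intro h
    induction h using AddSubmonoid.closure_induction with
    | mem u hu =>
      rcases hu with rfl | rfl | rfl
      · exact ⟨1, 0, 0, by ring⟩
      · exact ⟨0, 1, 0, by ring⟩
      · exact ⟨0, 0, 1, by ring⟩
    | zero => exact ⟨0, 0, 0, by ring⟩
    | add u v _ _ hu hv =>
      obtain ⟨x1, y1, z1, rfl⟩ := hu
      obtain ⟨x2, y2, z2, rfl⟩ := hv
      exact ⟨x1 + x2, y1 + y2, z1 + z2, by ring⟩
  · rintro ⟨x, y, z, rfl⟩
    have hp : p ∈ AddSubmonoid.closure ({p, q, r} : Set ℕ) :=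
      AddSubmonoid.subset_closure (by simp)
    have hq : q ∈ AddSubmonoid.closure ({p, q, r} : Set ℕ) :=
      AddSubmonoid.subset_closure (by simp)
    have hr : r ∈ AddSubmonoid.closure ({p, q, r} : Set ℕ) :=
      AddSubmonoid.subset_closure (by simp)
    have := AddSubmonoid.add_mem _ (AddSubmonoid.add_mem _
      (AddSubmonoid.nsmul_mem _ hp x) (AddSubmonoid.nsmul_mem _ hq y))
      (AddSubmonoid.nsmul_mem _ hr z)
    simpa [smul_eq_mul] using this

set_option maxHeartbeats 1000000 in
/-- With `m₁, m₂` coprime and `> 1`, `a ≥ 2`, `b + c ≥ 2`, `gcd(a, b m₁ + c m₂) = 1` and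
`S = ⟨a m₁, a m₂, b m₁ + c m₂⟩`: `a m₁ m₂ - a(b m₁ + c m₂) ∈ S` iff
`(b = 0 and c ≤ m₁)` or `(c = 0 and b ≤ m₂)`. -/
theorem stmt14 (m₁ m₂ a b c : ℕ) (hm₁ : 1 < m₁) (hm₂ : 1 < m₂)
    (hcopm : Nat.Coprime m₁ m₂) (ha : 2 ≤ a) (hbc : 2 ≤ b + c)
    (hcop : Nat.Coprime a (b * m₁ + c * m₂)) :
    (∃ s ∈ AddSubmonoid.closure ({a * m₁, a * m₂, b * m₁ + c * m₂} : Set ℕ),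
        (s : ℤ) = (a : ℤ) * m₁ * m₂ - (a : ℤ) * ((b : ℤ) * m₁ + (c : ℤ) * m₂)) ↔
      ((b = 0 ∧ c ≤ m₁) ∨ (c = 0 ∧ b ≤ m₂)) := by
  have ha0 : 0 < a := by omega
  constructor
  · rintro ⟨s, hs, heq⟩
    obtain ⟨x, y, z, rfl⟩ := mem_closure_triple.mp hs
    have h2 : ((x * (a * m₁) + y * (a * m₂) + z * (b * m₁ + c * m₂) : ℕ) : ℤ)
        = (a : ℤ) * m₁ * m₂ - (a : ℤ) * ((b : ℤ) * m₁ + (c : ℤ) * m₂) := heq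
    push_cast at h2
    -- a ∣ z, via ℤ
    have hdz : (a : ℤ) ∣ (z : ℤ) := by
      have hcopZ : IsCoprime (a : ℤ) ((b : ℤ) * m₁ + (c : ℤ) * m₂) := by
        have := Nat.isCoprime_iff_coprime.mpr hcop
        push_cast at this
        exact this
      refine hcopZ.dvd_of_dvd_mul_right ?_
      exact ⟨(m₁ : ℤ) * m₂ - ((b : ℤ) * m₁ + (c : ℤ) * m₂) - x * m₁ - y * m₂,
        by linarith [h2]⟩
    obtain ⟨t, ht⟩ : a ∣ z := Int.natCast_dvd_natCast.mp hdz
    subst ht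
    have key2 : (x + (t + 1) * b) * m₁ + (y + (t + 1) * c) * m₂ = m₁ * m₂ := by
      have hZ : (a : ℤ) * (((x : ℤ) + (t + 1) * b) * m₁ + ((y : ℤ) + (t + 1) * c) * m₂)
          = (a : ℤ) * ((m₁ : ℤ) * m₂) := by push_cast at h2 ⊢; linarith [h2]
      have := mul_left_cancel₀ (show (a : ℤ) ≠ 0 by positivity) hZ
      exact_mod_cast this
    set X := x + (t + 1) * b with hX
    set Y := y + (t + 1) * c with hY
    have hYle : Y ≤ m₁ :=
      Nat.le_of_mul_le_mul_right
        (Nat.le.intro (show Y * m₂ + X * m₁ = m₁ * m₂ by rw [Nat.add_comm]; exact key2))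
        (show 0 < m₂ by omega)
    have hXle : X ≤ m₂ :=
      Nat.le_of_mul_le_mul_right (Nat.le.intro (key2.trans (Nat.mul_comm m₁ m₂))) (show 0 < m₁ by omega)
    have key2Z : (X : ℤ) * m₁ + (Y : ℤ) * m₂ = (m₁ : ℤ) * m₂ := by exact_mod_cast key2
    have hcopmZ : IsCoprime (m₁ : ℤ) (m₂ : ℤ) := by
      have := Nat.isCoprime_iff_coprime.mpr hcopm
      push_cast at this
      exact this
    have hm2X : m₂ ∣ X := by
      refine Int.natCast_dvd_natCast.mp (hcopmZ.symm.dvd_of_dvd_mul_right ?_)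
      exact ⟨(m₁ : ℤ) - Y, by linarith [key2Z]⟩
    have hm1Y : m₁ ∣ Y := by
      refine Int.natCast_dvd_natCast.mp (hcopmZ.dvd_of_dvd_mul_right ?_)
      exact ⟨(m₂ : ℤ) - X, by linarith [key2Z]⟩
    obtain ⟨α, hα⟩ := hm2X
    obtain ⟨β, hβ⟩ := hm1Y
    have hab : α + β = 1 := by
      have hZ : ((α : ℤ) + β) * ((m₁ : ℤ) * m₂) = 1 * ((m₁ : ℤ) * m₂) := by
        have h1 : (X : ℤ) = (m₂ : ℤ) * α := by exact_mod_cast hα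
        have h2' : (Y : ℤ) = (m₁ : ℤ) * β := by exact_mod_cast hβ
        rw [h1, h2'] at key2Z
        linarith [key2Z]
      have := mul_right_cancel₀ (show ((m₁ : ℤ) * m₂) ≠ 0 by positivity) hZ
      exact_mod_cast this
    rcases (by omega : α = 0 ∧ β = 1 ∨ α = 1 ∧ β = 0) with ⟨rfl, rfl⟩ | ⟨rfl, rfl⟩
    · left
      have hx0 : X = 0 := by omega
      have hb0 : b = 0 := by
        rw [hX] at hx0
        have h3 : (t + 1) * b = 0 := by omega
        rcases Nat.mul_eq_zero.mp h3 with h | h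
        · omega
        · exact h
      refine ⟨hb0, ?_⟩
      have hy : y + (t + 1) * c = m₁ := by rw [← hY, hβ]; ring
      have hcle : c ≤ (t + 1) * c := Nat.le_mul_of_pos_left c (by omega)
      exact le_trans hcle (le_trans (Nat.le_add_left _ y) hy.le)
    · right
      have hy0 : Y = 0 := by omega
      have hc0 : c = 0 := by
        rw [hY] at hy0
        have h3 : (t + 1) * c = 0 := by omega
        rcases Nat.mul_eq_zero.mp h3 with h | h
        · omega
        · exact h
      refine ⟨hc0, ?_⟩
      have hx : x + (t + 1) * b = m₂ := by rw [← hX, hα]; ring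
      have hble : b ≤ (t + 1) * b := Nat.le_mul_of_pos_left b (by omega)
      exact le_trans hble (le_trans (Nat.le_add_left _ x) hx.le)
  · rintro (⟨hb, hc⟩ | ⟨hc, hb⟩)
    · refine ⟨(m₁ - c) * (a * m₂), mem_closure_triple.mpr ⟨0, m₁ - c, 0, by ring⟩, ?_⟩
      subst hb
      push_cast [Nat.cast_sub hc]
      ring
    · refine ⟨(m₂ - b) * (a * m₁), mem_closure_triple.mpr ⟨m₂ - b, 0, 0, by ring⟩, ?_⟩
      subst hc
      push_cast [Nat.cast_sub hb]
      ring
end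

section
/- Let a ≥ 3 be an integer. The numerical semigroup S = ⟨a, a+1, a+2⟩ is uniquely presented. -/
open Finset

variable {M : Type*} [AddCommMonoid M] {r : ℕ}

/-- The factorization homomorphism associated to the generating tuple `A`. -/
def phi (A : Fin r → M) (u : Fin r → ℕ) : M := ∑ i, u i • A i

/-- One step of the relation `R`: two factorizations of `a` with nonzero dot product. -/
def step (A : Fin r → M) (a : M) (u v : Fin r → ℕ) : Prop :=
  phi A u = a ∧ phi A v = a ∧ (∑ i, u i * v i) ≠ 0

/-- The relation `R` on the fiber of `a`: connected by a chain of factorizations with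
consecutive nonzero dot products. -/
def Rrel (A : Fin r → M) (a : M) : (Fin r → ℕ) → (Fin r → ℕ) → Prop :=
  Relation.ReflTransGen (step A a)

/-- `a` is a Betti element: its fiber has more than one `R`-class. -/
def IsBetti (A : Fin r → M) (a : M) : Prop :=
  ∃ u v : Fin r → ℕ, phi A u = a ∧ phi A v = a ∧ ¬ Rrel A a u v

/-- `a` is Betti-minimal: a Betti element minimal with respect to `b ≺ a ↔ a - b ∈ S`. -/
def BettiMinimal (A : Fin r → M) (a : M) : Prop :=
  IsBetti A a ∧ ∀ b : M, IsBetti A b → (∃ c : M, a = b + c) → b = a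

/-- `a` has a unique presentation: exactly two factorizations, with disjoint support. -/
def HasUniquePres (A : Fin r → M) (a : M) : Prop :=
  ∃ u v : Fin r → ℕ, u ≠ v ∧ {w : Fin r → ℕ | phi A w = a} = {u, v} ∧
    (∑ i, u i * v i) = 0

/-- The monoid generated by `A` is uniquely presented: every Betti element has exactly two
factorizations, with disjoint support. -/
def UniquelyPresented (A : Fin r → M) : Prop :=
  ∀ a : M, IsBetti A a → HasUniquePres A a

lemma vec3_0 (x y z : ℕ) : ![x,y,z] 0 = x := rfl
lemma vec3_1 (x y z : ℕ) : ![x,y,z] 1 = y := rfl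
lemma vec3_2 (x y z : ℕ) : ![x,y,z] 2 = z := rfl

lemma eq3 {w : Fin 3 → ℕ} {x y z : ℕ} (h0 : w 0 = x) (h1 : w 1 = y) (h2 : w 2 = z) :
    w = ![x,y,z] := by funext i; fin_cases i <;> simpa

lemma phi_eq (a : ℕ) (u : Fin 3 → ℕ) :
    phi ![a, a+1, a+2] u = (u 0 + u 1 + u 2) * a + (u 1 + 2 * u 2) := by
  simp [phi, Fin.sum_univ_three, smul_eq_mul]; ring

lemma dot3 (u v : Fin 3 → ℕ) : (∑ i, u i * v i) = u 0 * v 0 + u 1 * v 1 + u 2 * v 2 := by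
  simp [Fin.sum_univ_three]

lemma step_symm {a n : ℕ} {u v : Fin 3 → ℕ} (h : step ![a,a+1,a+2] n u v) :
    step ![a,a+1,a+2] n v u := by
  obtain ⟨h1, h2, h3⟩ := h
  refine ⟨h2, h1, ?_⟩
  rw [dot3] at h3 ⊢
  simpa [Nat.mul_comm] using h3

lemma rrel_symm {a n : ℕ} {u v : Fin 3 → ℕ} (h : Rrel ![a,a+1,a+2] n u v) :
    Rrel ![a,a+1,a+2] n v u :=
  @Std.Symm.symm _ _ (@Relation.ReflTransGen.stdSymm _ _ ⟨fun _ _ hs => step_symm hs⟩) _ _ h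

lemma sameLevelAux (a n : ℕ) (hn : n ≠ 2*a+2) :
    ∀ d (u v : Fin 3 → ℕ), phi ![a,a+1,a+2] u = n → phi ![a,a+1,a+2] v = n →
    u 0 + u 1 + u 2 = v 0 + v 1 + v 2 → u 2 ≤ v 2 → v 2 - u 2 = d →
    Rrel ![a,a+1,a+2] n u v := by
  intro d
  induction d with
  | zero =>
    intro u v hu hv hs h2 hd
    have hu' := (phi_eq a u).symm.trans hu
    have hv' := (phi_eq a v).symm.trans hv
    rw [hs] at hu'
    have : u = v := by
      have e2 : u 2 = v 2 := by omega
      have e1 : u 1 = v 1 := by omega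
      have e0 : u 0 = v 0 := by omega
      funext i; fin_cases i <;> assumption
    rw [this]; exact Relation.ReflTransGen.refl
  | succ d ih =>
    intro u v hu hv hs h2 hd
    have hu' := (phi_eq a u).symm.trans hu
    have hv' := (phi_eq a v).symm.trans hv
    have hv0 : 1 ≤ v 0 := by
      rw [hs] at hu'; omega
    have hv2 : 1 ≤ v 2 := by omega
    have hphiv' : phi ![a,a+1,a+2] ![v 0 - 1, v 1 + 2, v 2 - 1] = n := by
      rw [phi_eq]
      simp only [vec3_0, vec3_1, vec3_2]
      have hx : (v 0 - 1) + (v 1 + 2) + (v 2 - 1) = v 0 + v 1 + v 2 := by omega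
      rw [hx]; omega
    have hstep : step ![a,a+1,a+2] n ![v 0 - 1, v 1 + 2, v 2 - 1] v := by
      refine ⟨hphiv', hv, ?_⟩
      rw [dot3]
      simp only [vec3_0, vec3_1, vec3_2]
      rcases Nat.eq_zero_or_pos (v 1) with h1 | h1
      · rcases (show v 0 = 1 ∨ 2 ≤ v 0 by omega) with h0 | h0
        · rcases (show v 2 = 1 ∨ 2 ≤ v 2 by omega) with hz | hz
          · exfalso; apply hn
            rw [h0, h1, hz] at hv'; omega
          · have : 0 < (v 2 - 1) * v 2 := Nat.mul_pos (by omega) (by omega)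
            omega
        · have : 0 < (v 0 - 1) * v 0 := Nat.mul_pos (by omega) (by omega)
          omega
      · have : 0 < (v 1 + 2) * v 1 := Nat.mul_pos (by omega) h1
        omega
    have hR : Rrel ![a,a+1,a+2] n u ![v 0 - 1, v 1 + 2, v 2 - 1] := by
      apply ih u _ hu hphiv'
      · simp only [vec3_0, vec3_1, vec3_2]; omega
      · simp only [vec3_2]; omega
      · simp only [vec3_2]; omega
    exact hR.tail hstep

lemma sameLevel (a n : ℕ) (hn : n ≠ 2*a+2) (u v : Fin 3 → ℕ)
    (hu : phi ![a,a+1,a+2] u = n) (hv : phi ![a,a+1,a+2] v = n)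
    (hs : u 0 + u 1 + u 2 = v 0 + v 1 + v 2) : Rrel ![a,a+1,a+2] n u v := by
  rcases le_total (u 2) (v 2) with h | h
  · exact sameLevelAux a n hn _ u v hu hv hs h rfl
  · exact rrel_symm (sameLevelAux a n hn _ v u hv hu hs.symm h rfl)

def Excl (a n : ℕ) : Prop :=
  n = 2*a + 2 ∨ (∃ k, a = 2*k ∧ n = (k+1)*a) ∨ (∃ k, a = 2*k+1 ∧ n = (k+2)*a) ∨
    (∃ k, a = 2*k+1 ∧ n = (k+1)*(a+2))

lemma crossLevel (a n : ℕ) (ha : 3 ≤ a) (hex : ¬ Excl a n) (u v : Fin 3 → ℕ)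
    (hu : phi ![a,a+1,a+2] u = n) (hv : phi ![a,a+1,a+2] v = n)
    (hs : v 0 + v 1 + v 2 = (u 0 + u 1 + u 2) + 1) : Rrel ![a,a+1,a+2] n u v := by
  have hn1 : n ≠ 2*a+2 := fun h => hex (Or.inl h)
  have hun : (u 0 + u 1 + u 2) * a + (u 1 + 2*u 2) = n := (phi_eq a u).symm.trans hu
  have hvn : ((u 0 + u 1 + u 2) + 1) * a + (v 1 + 2*v 2) = n := by
    have h := (phi_eq a v).symm.trans hv
    rw [hs] at h; exact h
  have hac : a + (v 1 + 2*v 2) = u 1 + 2*u 2 := by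
    have e : ((u 0 + u 1 + u 2) + 1) * a = (u 0 + u 1 + u 2) * a + a := by ring
    omega
  -- abbreviations (purely notational below): s := u0+u1+u2, c := u1+2u2, c' := c - a
  have hwphi : phi ![a,a+1,a+2]
      ![(u 0 + u 1 + u 2) - ((u 1 + 2*u 2) % 2 + (u 1 + 2*u 2) / 2),
        (u 1 + 2*u 2) % 2, (u 1 + 2*u 2) / 2] = n := by
    rw [phi_eq]; simp only [vec3_0, vec3_1, vec3_2]
    have hx : (u 0 + u 1 + u 2) - ((u 1 + 2*u 2) % 2 + (u 1 + 2*u 2) / 2)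
        + (u 1 + 2*u 2) % 2 + (u 1 + 2*u 2) / 2 = u 0 + u 1 + u 2 := by omega
    rw [hx]; omega
  have hw'phi : phi ![a,a+1,a+2]
      ![(u 0 + u 1 + u 2) + 1 - ((u 1 + 2*u 2 - a) % 2 + (u 1 + 2*u 2 - a) / 2),
        (u 1 + 2*u 2 - a) % 2, (u 1 + 2*u 2 - a) / 2] = n := by
    rw [phi_eq]; simp only [vec3_0, vec3_1, vec3_2]
    have hx : (u 0 + u 1 + u 2) + 1 - ((u 1 + 2*u 2 - a) % 2 + (u 1 + 2*u 2 - a) / 2)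
        + (u 1 + 2*u 2 - a) % 2 + (u 1 + 2*u 2 - a) / 2 = (u 0 + u 1 + u 2) + 1 := by omega
    rw [hx]
    have e : ((u 0 + u 1 + u 2) + 1) * a = (u 0 + u 1 + u 2) * a + a := by ring
    omega
  have hdot : (∑ i,
      (![(u 0 + u 1 + u 2) - ((u 1 + 2*u 2) % 2 + (u 1 + 2*u 2) / 2),
        (u 1 + 2*u 2) % 2, (u 1 + 2*u 2) / 2] : Fin 3 → ℕ) i *
      (![(u 0 + u 1 + u 2) + 1 - ((u 1 + 2*u 2 - a) % 2 + (u 1 + 2*u 2 - a) / 2),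
        (u 1 + 2*u 2 - a) % 2, (u 1 + 2*u 2 - a) / 2] : Fin 3 → ℕ) i) ≠ 0 := by
    rw [dot3]; simp only [vec3_0, vec3_1, vec3_2]
    rcases (show 2 ≤ u 1 + 2*u 2 - a ∨ u 1 + 2*u 2 - a = 0 ∨ u 1 + 2*u 2 - a = 1 by omega)
      with h | h | h
    · have : 0 < (u 1 + 2*u 2) / 2 * ((u 1 + 2*u 2 - a) / 2) :=
        Nat.mul_pos (by omega) (by omega)
      omega
    · -- c' = 0, c = a
      have hxpos : 0 < (u 0 + u 1 + u 2) - ((u 1 + 2*u 2) % 2 + (u 1 + 2*u 2) / 2) := by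
        rcases Nat.eq_zero_or_pos ((u 0 + u 1 + u 2) - ((u 1 + 2*u 2) % 2 + (u 1 + 2*u 2) / 2))
          with h0 | h0
        · exfalso; apply hex
          rcases Nat.even_or_odd a with ⟨k, hk⟩ | ⟨k, hk⟩
          · right; left
            refine ⟨k, by omega, ?_⟩
            have hsk : u 0 + u 1 + u 2 = k := by omega
            have hthis := hvn
            rw [hsk] at hthis
            have e2 : (k+1)*a = (k+1)*a := rfl
            omega
          · right; right; left
            refine ⟨k, by omega, ?_⟩
            have hsk : u 0 + u 1 + u 2 = k + 1 := by omega
            have hthis := hvn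
            rw [hsk] at hthis
            have e2 : (k+1+1)*a = (k+2)*a := by ring
            omega
        · exact h0
      have : 0 < ((u 0 + u 1 + u 2) - ((u 1 + 2*u 2) % 2 + (u 1 + 2*u 2) / 2)) *
          ((u 0 + u 1 + u 2) + 1 - ((u 1 + 2*u 2 - a) % 2 + (u 1 + 2*u 2 - a) / 2)) :=
        Nat.mul_pos hxpos (by omega)
      omega
    · -- c' = 1, c = a + 1
      rcases Nat.even_or_odd a with ⟨k, hk⟩ | ⟨k, hk⟩
      · have : 0 < (u 1 + 2*u 2) % 2 * ((u 1 + 2*u 2 - a) % 2) :=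
          Nat.mul_pos (by omega) (by omega)
        omega
      · have hxpos : 0 < (u 0 + u 1 + u 2) - ((u 1 + 2*u 2) % 2 + (u 1 + 2*u 2) / 2) := by
          rcases Nat.eq_zero_or_pos ((u 0 + u 1 + u 2) - ((u 1 + 2*u 2) % 2 + (u 1 + 2*u 2) / 2))
            with h0 | h0
          · exfalso; apply hex
            right; right; right
            refine ⟨k, by omega, ?_⟩
            have hsk : u 0 + u 1 + u 2 = k + 1 := by omega
            have hthis := hun
            rw [hsk] at hthis
            have e2 : (k+1)*(a+2) = (k+1)*a + 2*k+2 := by rw [show a = 2*k+1 by omega]; ring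
            omega
          · exact h0
        have : 0 < ((u 0 + u 1 + u 2) - ((u 1 + 2*u 2) % 2 + (u 1 + 2*u 2) / 2)) *
            ((u 0 + u 1 + u 2) + 1 - ((u 1 + 2*u 2 - a) % 2 + (u 1 + 2*u 2 - a) / 2)) :=
          Nat.mul_pos hxpos (by omega)
        omega
  have h1 : Rrel ![a,a+1,a+2] n u _ := sameLevel a n hn1 u _ hu hwphi
    (by simp only [vec3_0, vec3_1, vec3_2]; omega)
  have h2 : Rrel ![a,a+1,a+2] n _ v := sameLevel a n hn1 _ v hw'phi hv
    (by simp only [vec3_0, vec3_1, vec3_2]; omega)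
  exact (h1.tail ⟨hwphi, hw'phi, hdot⟩).trans h2


lemma connectedAux (a n : ℕ) (ha : 3 ≤ a) (hex : ¬ Excl a n) :
    ∀ d (u v : Fin 3 → ℕ), phi ![a,a+1,a+2] u = n → phi ![a,a+1,a+2] v = n →
    (u 0 + u 1 + u 2) + d = v 0 + v 1 + v 2 → Rrel ![a,a+1,a+2] n u v := by
  intro d
  induction d with
  | zero =>
    intro u v hu hv hs
    exact sameLevel a n (fun h => hex (Or.inl h)) u v hu hv (by omega)
  | succ d ih =>
    intro u v hu hv hs
    have hun : (u 0 + u 1 + u 2) * a + (u 1 + 2*u 2) = n := (phi_eq a u).symm.trans hu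
    have hvn : ((u 0 + u 1 + u 2) + (d+1)) * a + (v 1 + 2*v 2) = n := by
      have h := (phi_eq a v).symm.trans hv
      rw [← hs] at h; exact h
    have hac : a ≤ u 1 + 2*u 2 := by
      have e : ((u 0 + u 1 + u 2) + (d+1)) * a
          = (u 0 + u 1 + u 2) * a + d*a + a := by ring
      omega
    have hwphi : phi ![a,a+1,a+2]
        ![(u 0 + u 1 + u 2) + 1 - ((u 1 + 2*u 2 - a) % 2 + (u 1 + 2*u 2 - a) / 2),
          (u 1 + 2*u 2 - a) % 2, (u 1 + 2*u 2 - a) / 2] = n := by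
      rw [phi_eq]; simp only [vec3_0, vec3_1, vec3_2]
      have hx : (u 0 + u 1 + u 2) + 1 - ((u 1 + 2*u 2 - a) % 2 + (u 1 + 2*u 2 - a) / 2)
          + (u 1 + 2*u 2 - a) % 2 + (u 1 + 2*u 2 - a) / 2 = (u 0 + u 1 + u 2) + 1 := by omega
      rw [hx]
      have e : ((u 0 + u 1 + u 2) + 1) * a = (u 0 + u 1 + u 2) * a + a := by ring
      omega
    have h1 : Rrel ![a,a+1,a+2] n u _ := crossLevel a n ha hex u _ hu hwphi
      (by simp only [vec3_0, vec3_1, vec3_2]; omega)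
    have h2 : Rrel ![a,a+1,a+2] n _ v := ih _ v hwphi hv
      (by simp only [vec3_0, vec3_1, vec3_2]; omega)
    exact h1.trans h2

lemma connected (a n : ℕ) (ha : 3 ≤ a) (hex : ¬ Excl a n) (u v : Fin 3 → ℕ)
    (hu : phi ![a,a+1,a+2] u = n) (hv : phi ![a,a+1,a+2] v = n) :
    Rrel ![a,a+1,a+2] n u v := by
  rcases le_total (u 0 + u 1 + u 2) (v 0 + v 1 + v 2) with h | h
  · exact connectedAux a n ha hex (v 0 + v 1 + v 2 - (u 0 + u 1 + u 2)) u v hu hv (by omega)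
  · exact rrel_symm (connectedAux a n ha hex (u 0 + u 1 + u 2 - (v 0 + v 1 + v 2)) v u hv hu (by omega))


lemma pres1 (a : ℕ) (ha : 3 ≤ a) : HasUniquePres ![a,a+1,a+2] (2*a+2) := by
  refine ⟨![1,0,1], ![0,2,0], ?_, ?_, ?_⟩
  · intro h
    have h0 := congrFun h 0
    simp only [vec3_0] at h0
    omega
  · ext w
    simp only [Set.mem_setOf_eq, Set.mem_insert_iff, Set.mem_singleton_iff]
    constructor
    · intro hw
      have h1 : (w 0 + w 1 + w 2) * a + (w 1 + 2*w 2) = 2*a+2 := (phi_eq a w).symm.trans hw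
      have hle : w 0 + w 1 + w 2 ≤ 2 := by
        by_contra h
        have h2 : 3*a ≤ (w 0 + w 1 + w 2)*a := mul_le_mul_left (by omega) a
        omega
      have hge : 2 ≤ w 0 + w 1 + w 2 := by
        by_contra h
        have h2 : (w 0 + w 1 + w 2)*a ≤ 1*a := mul_le_mul_left (by omega) a
        omega
      have hs2 : w 0 + w 1 + w 2 = 2 := by omega
      rw [hs2] at h1
      have hc : (w 0 = 1 ∧ w 1 = 0 ∧ w 2 = 1) ∨ (w 0 = 0 ∧ w 1 = 2 ∧ w 2 = 0) := by omega
      rcases hc with ⟨h0,h1',h2'⟩ | ⟨h0,h1',h2'⟩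
      · exact Or.inl (eq3 h0 h1' h2')
      · exact Or.inr (eq3 h0 h1' h2')
    · rintro (rfl | rfl)
      · rw [phi_eq]; simp only [vec3_0, vec3_1, vec3_2]; try ring
      · rw [phi_eq]; simp only [vec3_0, vec3_1, vec3_2]; try ring
  · rw [dot3]; simp only [vec3_0, vec3_1, vec3_2]; try ring

lemma pres2 (a k : ℕ) (hk : a = 2*k) (ha : 3 ≤ a) :
    HasUniquePres ![a,a+1,a+2] ((k+1)*a) := by
  refine ⟨![k+1,0,0], ![0,0,k], ?_, ?_, ?_⟩
  · intro h
    have h0 := congrFun h 0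
    simp only [vec3_0] at h0
    omega
  · ext w
    simp only [Set.mem_setOf_eq, Set.mem_insert_iff, Set.mem_singleton_iff]
    constructor
    · intro hw
      have h1 : (w 0 + w 1 + w 2) * a + (w 1 + 2*w 2) = (k+1)*a := (phi_eq a w).symm.trans hw
      have hle : w 0 + w 1 + w 2 ≤ k+1 := by
        by_contra h
        have h2 : (k+2)*a ≤ (w 0 + w 1 + w 2)*a := mul_le_mul_left (by omega) a
        have e : (k+2)*a = (k+1)*a + a := by ring
        omega
      have hge : k ≤ w 0 + w 1 + w 2 := by
        by_contra h
        have h2 : (w 0 + w 1 + w 2 + 1)*a ≤ k*a := mul_le_mul_left (by omega) a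
        have e1 : (w 0 + w 1 + w 2 + 1)*a = (w 0 + w 1 + w 2)*a + a := by ring
        have e2 : (k+1)*a = k*a + a := by ring
        omega
      rcases (show w 0 + w 1 + w 2 = k ∨ w 0 + w 1 + w 2 = k+1 by omega) with hs | hs
      · rw [hs] at h1
        have e2 : (k+1)*a = k*a + a := by ring
        have hc : w 0 = 0 ∧ w 1 = 0 ∧ w 2 = k := by omega
        exact Or.inr (eq3 hc.1 hc.2.1 hc.2.2)
      · rw [hs] at h1
        have hc : w 0 = k+1 ∧ w 1 = 0 ∧ w 2 = 0 := by omega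
        exact Or.inl (eq3 hc.1 hc.2.1 hc.2.2)
    · rintro (rfl | rfl)
      · rw [phi_eq]; simp only [vec3_0, vec3_1, vec3_2]; try ring
      · rw [phi_eq]; simp only [vec3_0, vec3_1, vec3_2]; try rw [hk]
        try ring
  · rw [dot3]; simp only [vec3_0, vec3_1, vec3_2]; try ring

lemma pres3 (a k : ℕ) (hk : a = 2*k+1) (ha : 3 ≤ a) :
    HasUniquePres ![a,a+1,a+2] ((k+2)*a) := by
  refine ⟨![k+2,0,0], ![0,1,k], ?_, ?_, ?_⟩
  · intro h
    have h0 := congrFun h 0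
    simp only [vec3_0] at h0
    omega
  · ext w
    simp only [Set.mem_setOf_eq, Set.mem_insert_iff, Set.mem_singleton_iff]
    constructor
    · intro hw
      have h1 : (w 0 + w 1 + w 2) * a + (w 1 + 2*w 2) = (k+2)*a := (phi_eq a w).symm.trans hw
      have hle : w 0 + w 1 + w 2 ≤ k+2 := by
        by_contra h
        have h2 : (k+3)*a ≤ (w 0 + w 1 + w 2)*a := mul_le_mul_left (by omega) a
        have e : (k+3)*a = (k+2)*a + a := by ring
        omega
      have hge : k+1 ≤ w 0 + w 1 + w 2 := by
        by_contra h
        have h2 : (w 0 + w 1 + w 2 + 1)*a ≤ (k+1)*a := mul_le_mul_left (by omega) a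
        have e1 : (w 0 + w 1 + w 2 + 1)*a = (w 0 + w 1 + w 2)*a + a := by ring
        have e2 : (k+2)*a = (k+1)*a + a := by ring
        omega
      rcases (show w 0 + w 1 + w 2 = k+1 ∨ w 0 + w 1 + w 2 = k+2 by omega) with hs | hs
      · rw [hs] at h1
        have e2 : (k+2)*a = (k+1)*a + a := by ring
        have hc : w 0 = 0 ∧ w 1 = 1 ∧ w 2 = k := by omega
        exact Or.inr (eq3 hc.1 hc.2.1 hc.2.2)
      · rw [hs] at h1
        have hc : w 0 = k+2 ∧ w 1 = 0 ∧ w 2 = 0 := by omega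
        exact Or.inl (eq3 hc.1 hc.2.1 hc.2.2)
    · rintro (rfl | rfl)
      · rw [phi_eq]; simp only [vec3_0, vec3_1, vec3_2]; try ring
      · rw [phi_eq]; simp only [vec3_0, vec3_1, vec3_2]; try rw [hk]
        try ring
  · rw [dot3]; simp only [vec3_0, vec3_1, vec3_2]; try ring

lemma pres4 (a k : ℕ) (hk : a = 2*k+1) (ha : 3 ≤ a) :
    HasUniquePres ![a,a+1,a+2] ((k+1)*(a+2)) := by
  have hk1 : 1 ≤ k := by omega
  refine ⟨![0,0,k+1], ![k+1,1,0], ?_, ?_, ?_⟩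
  · intro h
    have h0 := congrFun h 1
    simp only [vec3_1] at h0
    omega
  · ext w
    simp only [Set.mem_setOf_eq, Set.mem_insert_iff, Set.mem_singleton_iff]
    constructor
    · intro hw
      have h1 : (w 0 + w 1 + w 2) * a + (w 1 + 2*w 2) = (k+1)*(a+2) := (phi_eq a w).symm.trans hw
      have e0 : (k+1)*(a+2) = (k+1)*a + 2*k+2 := by rw [hk]; ring
      have hle : w 0 + w 1 + w 2 ≤ k+2 := by
        by_contra h
        have h2 : (k+3)*a ≤ (w 0 + w 1 + w 2)*a := mul_le_mul_left (by omega) a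
        have e : (k+3)*a = (k+1)*a + 2*a := by ring
        omega
      have hge : k+1 ≤ w 0 + w 1 + w 2 := by
        by_contra h
        have h2 : (w 0 + w 1 + w 2 + 1)*a ≤ (k+1)*a := mul_le_mul_left (by omega) a
        have e1 : (w 0 + w 1 + w 2 + 1)*a = (w 0 + w 1 + w 2)*a + a := by ring
        omega
      rcases (show w 0 + w 1 + w 2 = k+1 ∨ w 0 + w 1 + w 2 = k+2 by omega) with hs | hs
      · rw [hs] at h1
        have hc : w 0 = 0 ∧ w 1 = 0 ∧ w 2 = k+1 := by omega
        exact Or.inl (eq3 hc.1 hc.2.1 hc.2.2)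
      · rw [hs] at h1
        have e2 : (k+2)*a = (k+1)*a + a := by ring
        have hc : w 0 = k+1 ∧ w 1 = 1 ∧ w 2 = 0 := by omega
        exact Or.inr (eq3 hc.1 hc.2.1 hc.2.2)
    · rintro (rfl | rfl)
      · rw [phi_eq]; simp only [vec3_0, vec3_1, vec3_2]; try ring
      · rw [phi_eq]; simp only [vec3_0, vec3_1, vec3_2]; try rw [hk]
        try ring
  · rw [dot3]; simp only [vec3_0, vec3_1, vec3_2]; try ring

/-- For `a ≥ 3`, the numerical semigroup `⟨a, a+1, a+2⟩` is uniquely presented. -/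
theorem stmt17 (a : ℕ) (ha : 3 ≤ a) :
    UniquelyPresented ![a, a + 1, a + 2] := by
  intro n hb
  by_cases hex : Excl a n
  · rcases hex with h | ⟨k, hk, h⟩ | ⟨k, hk, h⟩ | ⟨k, hk, h⟩
    · rw [h]; exact pres1 a ha
    · rw [h]; exact pres2 a k hk ha
    · rw [h]; exact pres3 a k hk ha
    · rw [h]; exact pres4 a k hk ha
  · obtain ⟨u, v, hu, hv, hr⟩ := hb
    exact absurd (connected a n ha hex u v hu hv) hr
end
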